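/- Acyclic RCNMS theorem, base and induction structure: Let (𝒫, 𝓡) satisfy RCNMS (CNMS minus the restriction that conditions only reference sensor automata) and suppose the dependency graph of (𝒫, 𝓡) is acyclic and self-loop free. Then 𝒫 || 𝓡 is controllable with respect to ||𝒫, nonblocking, and moreover every component plant composed with the applicable requirements remains strongly connected. -/

import Mathlib

open scoped Classical

/-- A finite-automaton-style structure: alphabet, partial transition
function, initial state, and marked states. -/
structure Aut (Q E : Type) where
  alph : Set E
  δ : Q → E → Option Q
  q0 : Q
  Qm : Set Q

namespace Aut

variable {Q Q1 Q2 E : Type}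

/-- Extension of the partial transition function to strings. -/
def run (A : Aut Q E) : Q → List E → Option Q
  | q, [] => some q
  | q, e :: s => (A.δ q e).bind fun q' => A.run q' s

/-- Generated language. -/
def Lang (A : Aut Q E) : Set (List E) := {s | (A.run A.q0 s).isSome}

/-- Marked language. -/
def LangM (A : Aut Q E) : Set (List E) := {s | ∃ q ∈ A.Qm, A.run A.q0 s = some q}

def Reachable (A : Aut Q E) (q : Q) : Prop := ∃ s, A.run A.q0 s = some q

def Coreachable (A : Aut Q E) (q : Q) : Prop :=
  ∃ s q', A.run q s = some q' ∧ q' ∈ A.Qm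

def Trim (A : Aut Q E) : Prop := ∀ q, A.Reachable q ∧ A.Coreachable q

def Nonblocking (A : Aut Q E) : Prop := ∀ q, A.Reachable q → A.Coreachable q

def StronglyConnected (A : Aut Q E) : Prop := ∀ q1 q2 : Q, ∃ s, A.run q1 s = some q2

/-- Synchronous composition of two automata. -/
noncomputable def sync (A : Aut Q1 E) (B : Aut Q2 E) : Aut (Q1 × Q2) E where
  alph := A.alph ∪ B.alph
  δ := fun p e =>
    if e ∈ A.alph ∧ e ∈ B.alph then
      match A.δ p.1 e, B.δ p.2 e with
      | some a, some b => some (a, b)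
      | _, _ => none
    else if e ∈ A.alph then (A.δ p.1 e).map (fun a => (a, p.2))
    else if e ∈ B.alph then (B.δ p.2 e).map (fun b => (p.1, b))
    else none
  q0 := (A.q0, B.q0)
  Qm := {p | p.1 ∈ A.Qm ∧ p.2 ∈ B.Qm}

end Aut

namespace Aut

/-- Synchronous composition of a product system (pairwise disjoint alphabets):
the shuffle automaton on the product state space. -/
noncomputable def shuffle {m : ℕ} {Q : Fin m → Type} {E : Type}
    (A : ∀ i, Aut (Q i) E) : Aut (∀ i, Q i) E where
  alph := ⋃ i, (A i).alph
  δ := fun q e =>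
    if h : ∃ i, e ∈ (A i).alph then
      ((A h.choose).δ (q h.choose) e).map fun q' => Function.update q h.choose q'
    else none
  q0 := fun i => (A i).q0
  Qm := {q | ∀ i, q i ∈ (A i).Qm}

end Aut

namespace Aut

/-- Synchronous composition of an automaton with a state-event invariant
expression `μ needs C`: transitions labeled `μ` are removed from states
where the condition `C` is false. -/
noncomputable def restrict {Q E : Type} (A : Aut Q E) (μ : E) (C : Q → Prop) :
    Aut Q E where
  alph := A.alph
  δ := fun q e => if e = μ ∧ ¬ C q then none else A.δ q e
  q0 := A.q0
  Qm := A.Qm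

end Aut

/-- A literal: a (possibly negated) state reference `P_i.q`. -/
structure Lit (m : ℕ) (Q : Fin m → Type) where
  i : Fin m
  q : Q i
  pos : Bool

/-- Evaluation of a literal at a global state. -/
def Lit.eval {m : ℕ} {Q : Fin m → Type} (l : Lit m Q) (r : ∀ i, Q i) : Prop :=
  if l.pos then r l.i = l.q else r l.i ≠ l.q

/-- A predicate in disjunctive normal form over state references. -/
abbrev DNF (m : ℕ) (Q : Fin m → Type) := List (List (Lit m Q))

/-- Evaluation of a DNF predicate at a global state. -/
def DNF.eval {m : ℕ} {Q : Fin m → Type} (C : DNF m Q) (r : ∀ i, Q i) : Prop :=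
  ∃ conj ∈ C, ∀ l ∈ conj, l.eval r

/-- `K` is controllable with respect to `G` (given uncontrollable events `Su`). -/
def Controllable {QK QG E : Type} (Su : Set E) (K : Aut QK E) (G : Aut QG E) : Prop :=
  ∀ (s : List E) (u : E), u ∈ Su → (K.run K.q0 s).isSome →
    (G.run G.q0 (s ++ [u])).isSome → (K.run K.q0 (s ++ [u])).isSome

/-- A control problem satisfying the RCNMS properties (CNMS minus the
restriction that conditions only reference sensor automata). -/
structure RCNMS (m : ℕ) (Q : Fin m → Type) (E : Type) where
  plant : ∀ i, Aut (Q i) E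
  /-- controllable events -/
  Sc : Set E
  /-- uncontrollable events -/
  Su : Set E
  /-- the requirements: state-event invariant expressions `μ needs C` -/
  reqs : List (E × DNF m Q)
  part : ∀ e : E, ¬(e ∈ Sc ∧ e ∈ Su)
  events : ∀ i, (plant i).alph ⊆ Sc ∪ Su
  /-- the plant is a product system -/
  disj : ∀ i j, i ≠ j → ∀ e, ¬(e ∈ (plant i).alph ∧ e ∈ (plant j).alph)
  dom : ∀ i q e, (plant i).δ q e ≠ none → e ∈ (plant i).alph
  sc : ∀ i, (plant i).StronglyConnected
  hasMarked : ∀ i, ∃ q, q ∈ (plant i).Qm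
  evIn : ∀ r ∈ reqs, ∃ i, r.1 ∈ (plant i).alph
  ctrl : ∀ r ∈ reqs, r.1 ∈ Sc
  uniq : ∀ r1 ∈ reqs, ∀ r2 ∈ reqs, r1.1 = r2.1 → r1 = r2
  once : ∀ r ∈ reqs, ∀ conj ∈ r.2, ∀ l1 ∈ conj, ∀ l2 ∈ conj, l1.i = l2.i → l1 = l2
  nneg : ∀ r ∈ reqs, ∀ conj ∈ r.2, ∀ l ∈ conj, l.pos = false → ∃ a b : Q l.i, a ≠ b
  condNe : ∀ r ∈ reqs, r.2 ≠ []

namespace RCNMS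

variable {m : ℕ} {Q : Fin m → Type} {E : Type}

noncomputable def plantComp (cp : RCNMS m Q E) : Aut (∀ i, Q i) E :=
  Aut.shuffle cp.plant

noncomputable def sup (cp : RCNMS m Q E) : Aut (∀ i, Q i) E :=
  cp.reqs.foldl (fun A r => A.restrict r.1 (fun g => r.2.eval g)) cp.plantComp

/-- The dependency graph edge relation: there is an edge from plant `i` to
plant `j` if some requirement restricts an event of `i` and references a
state of `j` in its condition. -/
def DepEdge (cp : RCNMS m Q E) (i j : Fin m) : Prop :=
  ∃ r ∈ cp.reqs, r.1 ∈ (cp.plant i).alph ∧ ∃ conj ∈ r.2, ∃ l ∈ conj, l.i = j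

end RCNMS


section AuxProofs

open Relation List

variable {m : ℕ} {Q : Fin m → Type} {E : Type}

theorem Aut.run_append {S : Type} (A : Aut S E) (q : S) (s t : List E) :
    A.run q (s ++ t) = (A.run q s).bind fun q' => A.run q' t := by
  induction s generalizing q with
  | nil => simp [Aut.run]
  | cons e s ih =>
    simp only [List.cons_append, Aut.run]
    cases A.δ q e with
    | none => rfl
    | some q' => simp [ih]

theorem shuffle_delta (A : ∀ i, Aut (Q i) E)
    (hdisj : ∀ i j, i ≠ j → ∀ e, ¬(e ∈ (A i).alph ∧ e ∈ (A j).alph))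
    (g : ∀ i, Q i) (e : E) (i : Fin m) (he : e ∈ (A i).alph) :
    (Aut.shuffle A).δ g e = ((A i).δ (g i) e).map fun q' => Function.update g i q' := by
  have h : ∃ k, e ∈ (A k).alph := ⟨i, he⟩
  have hik : h.choose = i := by
    by_contra hne
    exact hdisj _ _ hne e ⟨h.choose_spec, he⟩
  simp only [Aut.shuffle]
  rw [dif_pos h]
  subst hik
  rfl

theorem foldl_delta (rs : List (E × DNF m Q)) (A : Aut (∀ i, Q i) E) (g : ∀ i, Q i) (e : E) :
    (rs.foldl (fun A r => A.restrict r.1 fun g => r.2.eval g) A).δ g e =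
      if ∃ r ∈ rs, r.1 = e ∧ ¬ r.2.eval g then none else A.δ g e := by
  induction rs generalizing A with
  | nil => simp
  | cons r rs ih =>
    simp only [List.foldl_cons, ih]
    by_cases h1 : ∃ r' ∈ rs, r'.1 = e ∧ ¬ r'.2.eval g
    · rw [if_pos h1, if_pos (by obtain ⟨r', h, h2⟩ := h1; exact ⟨r', List.mem_cons_of_mem _ h, h2⟩)]
    · rw [if_neg h1]
      by_cases h2 : e = r.1 ∧ ¬ r.2.eval g
      · simp only [Aut.restrict, if_pos h2]
        rw [if_pos ⟨r, List.mem_cons_self, h2.1.symm, h2.2⟩]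
      · simp only [Aut.restrict]
        rw [if_neg h2, if_neg]
        rintro ⟨r', hr', h3, h4⟩
        rcases List.mem_cons.1 hr' with h | h
        · subst h; exact h2 ⟨h3.symm, h4⟩
        · exact h1 ⟨r', h, h3, h4⟩

theorem foldl_q0 (rs : List (E × DNF m Q)) (A : Aut (∀ i, Q i) E) :
    (rs.foldl (fun A r => A.restrict r.1 fun g => r.2.eval g) A).q0 = A.q0 := by
  induction rs generalizing A with
  | nil => rfl
  | cons r rs ih => simp only [List.foldl_cons, ih]; rfl

theorem foldl_Qm (rs : List (E × DNF m Q)) (A : Aut (∀ i, Q i) E) :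
    (rs.foldl (fun A r => A.restrict r.1 fun g => r.2.eval g) A).Qm = A.Qm := by
  induction rs generalizing A with
  | nil => rfl
  | cons r rs ih => simp only [List.foldl_cons, ih]; rfl

theorem sup_delta (cp : RCNMS m Q E) (g : ∀ i, Q i) (e : E) :
    cp.sup.δ g e = if ∃ r ∈ cp.reqs, r.1 = e ∧ ¬ r.2.eval g then none
      else cp.plantComp.δ g e := foldl_delta _ _ _ _

theorem sup_q0 (cp : RCNMS m Q E) : cp.sup.q0 = cp.plantComp.q0 := foldl_q0 _ _

theorem sup_Qm (cp : RCNMS m Q E) : cp.sup.Qm = cp.plantComp.Qm := foldl_Qm _ _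

theorem sup_run_imp (cp : RCNMS m Q E) :
    ∀ (s : List E) (q g' : ∀ i, Q i), cp.sup.run q s = some g' →
      cp.plantComp.run q s = some g' := by
  intro s
  induction s with
  | nil => intro q g' h; exact h
  | cons e s ih =>
    intro q g' h
    simp only [Aut.run] at h ⊢
    rw [sup_delta] at h
    split at h
    · simp at h
    · cases hd : cp.plantComp.δ q e with
      | none => rw [hd] at h; simp at h
      | some q1 => rw [hd] at h; simp only [Option.bind_some] at h ⊢; exact ih q1 g' h

noncomputable def hgt (cp : RCNMS m Q E) (i : Fin m) : ℕ :=
  (Finset.univ.filter fun j => Relation.TransGen cp.DepEdge i j).card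

theorem hgt_lt (cp : RCNMS m Q E) (hacyc : ∀ i, ¬ Relation.TransGen cp.DepEdge i i)
    {i j : Fin m} (hij : cp.DepEdge i j) : hgt cp j < hgt cp i := by
  apply Finset.card_lt_card
  rw [Finset.ssubset_iff_of_subset]
  · refine ⟨j, by simp [Relation.TransGen.single hij], by simp [hacyc j]⟩
  · intro a ha
    simp only [Finset.mem_filter, Finset.mem_univ, true_and] at ha ⊢
    exact Relation.TransGen.head hij ha

theorem conjdrive (cp : RCNMS m Q E) :
    ∀ (conj : List (Lit m Q))
      (_ : ∀ l ∈ conj, ∀ (g : ∀ k, Q k) (t : Q l.i), ∃ s g', cp.sup.run g s = some g' ∧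
          g' l.i = t ∧ ∀ j, j ≠ l.i → hgt cp l.i ≤ hgt cp j → g' j = g j)
      (_ : conj.Pairwise fun a b => hgt cp b.i ≤ hgt cp a.i)
      (_ : ∀ l1 ∈ conj, ∀ l2 ∈ conj, l1.i = l2.i → l1 = l2)
      (_ : ∀ l ∈ conj, l.pos = false → ∃ a b : Q l.i, a ≠ b)
      (g : ∀ k, Q k),
      ∃ s g', cp.sup.run g s = some g' ∧ (∀ l ∈ conj, l.eval g') ∧
        ∀ j, (∀ l ∈ conj, l.i ≠ j ∧ hgt cp l.i ≤ hgt cp j) → g' j = g j := by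
  intro conj
  induction conj with
  | nil => intro _ _ _ _ g; exact ⟨[], g, rfl, by simp, fun _ _ => rfl⟩
  | cons l rest ih =>
    intro hIH hsort honce hneg g
    obtain ⟨t0, ht0p, ht0n⟩ : ∃ t0 : Q l.i, (l.pos = true → t0 = l.q) ∧
        (l.pos = false → t0 ≠ l.q) := by
      cases hp : l.pos with
      | false =>
        obtain ⟨a, b, hab⟩ := hneg l (List.mem_cons_self) hp
        refine ⟨if a = l.q then b else a, by simp [hp], fun _ => ?_⟩
        split
        · next h => intro hbq; exact hab (by rw [h, hbq])
        · next h => exact h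
      | true => exact ⟨l.q, fun _ => rfl, by simp [hp]⟩
    obtain ⟨s1, g1, hs1, hg1, hfr1⟩ := hIH l (List.mem_cons_self) g t0
    obtain ⟨s2, g2, hs2, hev2, hfr2⟩ := ih
      (fun l' hl' => hIH l' (List.mem_cons_of_mem _ hl'))
      (List.pairwise_cons.1 hsort).2
      (fun l1 h1 l2 h2 => honce l1 (List.mem_cons_of_mem _ h1) l2 (List.mem_cons_of_mem _ h2))
      (fun l' hl' => hneg l' (List.mem_cons_of_mem _ hl')) g1
    have hl_eval : l.eval g2 := by
      by_cases hdup : ∃ l' ∈ rest, l'.i = l.i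
      · obtain ⟨l', hl', hli⟩ := hdup
        have heq : l' = l := honce l' (List.mem_cons_of_mem _ hl') l (List.mem_cons_self) hli
        exact heq ▸ hev2 l' hl'
      · have hcomp : g2 l.i = g1 l.i := by
          apply hfr2
          intro l' hl'
          exact ⟨fun h => hdup ⟨l', hl', h⟩, (List.pairwise_cons.1 hsort).1 l' hl'⟩
        have hev1 : l.eval g1 := by
          cases hp : l.pos with
          | true =>
            simp only [Lit.eval, hp, if_true]
            rw [hg1]; exact ht0p hp
          | false =>
            simp only [Lit.eval, hp, Bool.false_eq_true, if_false]
            rw [hg1]; exact ht0n hp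
        unfold Lit.eval at hev1 ⊢
        rw [hcomp]
        exact hev1
    refine ⟨s1 ++ s2, g2, by rw [Aut.run_append, hs1]; simpa using hs2, ?_, ?_⟩
    · intro l' hl'
      rcases List.mem_cons.1 hl' with h | h
      · exact h ▸ hl_eval
      · exact hev2 l' h
    · intro j hj
      have h1 := hj l (List.mem_cons_self)
      rw [hfr2 j (fun l' hl' => hj l' (List.mem_cons_of_mem _ hl'))]
      exact hfr1 j (Ne.symm h1.1) h1.2

theorem drive (cp : RCNMS m Q E) (hacyc : ∀ i, ¬ Relation.TransGen cp.DepEdge i i) :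
    ∀ (n : ℕ) (i : Fin m), hgt cp i < n → ∀ (g : ∀ k, Q k) (t : Q i),
      ∃ s g', cp.sup.run g s = some g' ∧ g' i = t ∧
        ∀ j, j ≠ i → hgt cp i ≤ hgt cp j → g' j = g j := by
  intro n
  induction n with
  | zero => intro i h; omega
  | succ n IH =>
    intro i hi g t
    obtain ⟨w, hw⟩ := cp.sc i (g i) t
    suffices key : ∀ (w : List E) (g : ∀ k, Q k), (cp.plant i).run (g i) w = some t →
        ∃ s g', cp.sup.run g s = some g' ∧ g' i = t ∧
          ∀ j, j ≠ i → hgt cp i ≤ hgt cp j → g' j = g j by exact key w g hw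
    intro w
    induction w with
    | nil =>
      intro g hw
      simp only [Aut.run] at hw
      exact ⟨[], g, rfl, Option.some.inj hw, fun j _ _ => rfl⟩
    | cons e w' ihw =>
      intro g hw
      simp only [Aut.run] at hw
      cases hδ : (cp.plant i).δ (g i) e with
      | none => rw [hδ] at hw; simp at hw
      | some q1 =>
        rw [hδ] at hw
        simp only [Option.bind_some] at hw
        have he : e ∈ (cp.plant i).alph := cp.dom i (g i) e (by rw [hδ]; simp)
        have henable : ∃ s1 g1, cp.sup.run g s1 = some g1 ∧
            (¬ ∃ r ∈ cp.reqs, r.1 = e ∧ ¬ r.2.eval g1) ∧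
            ∀ j, hgt cp i ≤ hgt cp j → g1 j = g j := by
          by_cases hreq : ∃ r ∈ cp.reqs, r.1 = e
          · obtain ⟨r, hr, hre⟩ := hreq
            have hCne := cp.condNe r hr
            set conj0 := r.2.head hCne with hconj0
            have hc0 : conj0 ∈ r.2 := List.head_mem hCne
            set le : Lit m Q → Lit m Q → Bool := fun a b => decide (hgt cp b.i ≤ hgt cp a.i)
              with hle
            set conj := conj0.mergeSort le with hconj
            have hperm : conj.Perm conj0 := List.mergeSort_perm conj0 le
            have hmem : ∀ l, l ∈ conj → l ∈ conj0 := fun l hl => hperm.mem_iff.1 hl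
            have hedge : ∀ l ∈ conj, cp.DepEdge i l.i := by
              intro l hl
              exact ⟨r, hr, hre ▸ he, conj0, hc0, l, hmem l hl, rfl⟩
            have hlt : ∀ l ∈ conj, hgt cp l.i < hgt cp i :=
              fun l hl => hgt_lt cp hacyc (hedge l hl)
            have hIH : ∀ l ∈ conj, ∀ (g : ∀ k, Q k) (t : Q l.i), ∃ s g',
                cp.sup.run g s = some g' ∧ g' l.i = t ∧
                ∀ j, j ≠ l.i → hgt cp l.i ≤ hgt cp j → g' j = g j := by
              intro l hl
              exact IH l.i (by have := hlt l hl; omega)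
            have hsort : conj.Pairwise fun a b => hgt cp b.i ≤ hgt cp a.i := by
              have hs := List.pairwise_mergeSort (le := le)
                (fun a b c h1 h2 => by simp only [hle, decide_eq_true_eq] at *; omega)
                (fun a b => by simp only [hle, Bool.or_eq_true, decide_eq_true_eq]; omega)
                conj0
              rw [← hconj] at hs
              exact hs.imp (fun h => by simpa [hle, decide_eq_true_eq] using h)
            have honce : ∀ l1 ∈ conj, ∀ l2 ∈ conj, l1.i = l2.i → l1 = l2 :=
              fun l1 h1 l2 h2 => cp.once r hr conj0 hc0 l1 (hmem _ h1) l2 (hmem _ h2)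
            have hneg : ∀ l ∈ conj, l.pos = false → ∃ a b : Q l.i, a ≠ b :=
              fun l hl => cp.nneg r hr conj0 hc0 l (hmem _ hl)
            obtain ⟨s1, g1, hs1, heval, hfr⟩ := conjdrive cp conj hIH hsort honce hneg g
            refine ⟨s1, g1, hs1, ?_, ?_⟩
            · rintro ⟨r', hr', hre', hnev⟩
              have hrr : r' = r := cp.uniq r' hr' r hr (by rw [hre', hre])
              subst hrr
              exact hnev ⟨conj0, hc0, fun l hl => heval l (hperm.mem_iff.2 hl)⟩
            · intro j hj
              apply hfr
              intro l hl
              have h1 := hlt l hl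
              exact ⟨fun h => by rw [h] at h1; omega, by omega⟩
          · exact ⟨[], g, rfl, fun ⟨r, hr, hre, _⟩ => hreq ⟨r, hr, hre⟩, fun j _ => rfl⟩
        obtain ⟨s1, g1, hs1, hen, hfr1⟩ := henable
        have hg1i : g1 i = g i := hfr1 i le_rfl
        have hstep : cp.sup.δ g1 e = some (Function.update g1 i q1) := by
          rw [sup_delta, if_neg hen]
          show (Aut.shuffle cp.plant).δ g1 e = _
          rw [shuffle_delta cp.plant cp.disj g1 e i he, hg1i, hδ]
          rfl
        obtain ⟨s3, g3, hs3, hg3, hfr3⟩ := ihw (Function.update g1 i q1)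
          (by rw [Function.update_self]; exact hw)
        refine ⟨s1 ++ e :: s3, g3, ?_, hg3, ?_⟩
        · rw [Aut.run_append, hs1]
          simp only [Option.bind_some, Aut.run]
          rw [hstep]
          simpa using hs3
        · intro j hj hje
          rw [hfr3 j hj hje, Function.update_of_ne hj, hfr1 j hje]

theorem markdrive (cp : RCNMS m Q E) (hacyc : ∀ i, ¬ Relation.TransGen cp.DepEdge i i) :
    ∀ (L : List (Fin m)) (_ : L.Pairwise fun a b => hgt cp b ≤ hgt cp a) (g : ∀ k, Q k),
      ∃ s g', cp.sup.run g s = some g' ∧ (∀ i ∈ L, g' i ∈ (cp.plant i).Qm) ∧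
        ∀ j, (∀ i ∈ L, i ≠ j ∧ hgt cp i ≤ hgt cp j) → g' j = g j := by
  intro L
  induction L with
  | nil => intro _ g; exact ⟨[], g, rfl, by simp, fun _ _ => rfl⟩
  | cons i rest ih =>
    intro hsort g
    obtain ⟨tm, htm⟩ := cp.hasMarked i
    obtain ⟨s1, g1, hs1, hg1, hfr1⟩ := drive cp hacyc (hgt cp i + 1) i (by omega) g tm
    obtain ⟨s2, g2, hs2, hm2, hfr2⟩ := ih (List.pairwise_cons.1 hsort).2 g1
    refine ⟨s1 ++ s2, g2, by rw [Aut.run_append, hs1]; simpa using hs2, ?_, ?_⟩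
    · intro i' hi'
      rcases List.mem_cons.1 hi' with h | h
      · subst h
        by_cases hdup : ∃ i'' ∈ rest, i'' = i'
        · obtain ⟨i'', h2, h3⟩ := hdup
          exact h3 ▸ hm2 i'' h2
        · have hcomp : g2 i' = g1 i' := hfr2 i' (fun i'' h2 =>
            ⟨fun hh => hdup ⟨i'', h2, hh⟩, (List.pairwise_cons.1 hsort).1 i'' h2⟩)
          rw [hcomp, hg1]; exact htm
      · exact hm2 _ h
    · intro j hj
      have h1 := hj i (List.mem_cons_self)
      rw [hfr2 j (fun i'' h2 => hj i'' (List.mem_cons_of_mem _ h2))]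
      exact hfr1 j (Ne.symm h1.1) h1.2

end AuxProofs

/-- Acyclic RCNMS: if a control problem satisfies RCNMS and
its dependency graph is acyclic and self-loop free (no vertex reaches itself
by a nonempty chain of edges), then `𝒫 ‖ 𝓡` is controllable with respect to
`‖𝒫`, nonblocking, and each component plant composed with the applicable
requirements remains strongly connected (from any global state, any state of
any component can be reached in the controlled system). -/
theorem rcnms_acyclic_no_synthesis {m : ℕ} {Q : Fin m → Type} {E : Type}
    (cp : RCNMS m Q E)
    (hacyc : ∀ i, ¬ Relation.TransGen cp.DepEdge i i) :
    Controllable cp.Su cp.sup cp.plantComp ∧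
    cp.sup.Nonblocking ∧
    (∀ (g : ∀ i, Q i) (i : Fin m) (t : Q i),
      ∃ (s : List E) (g' : ∀ i, Q i), cp.sup.run g s = some g' ∧ g' i = t) := by
  have hq0 : cp.sup.q0 = cp.plantComp.q0 := sup_q0 cp
  refine ⟨?_, ?_, ?_⟩
  · intro s u hu hks hgs
    obtain ⟨g, hg⟩ := Option.isSome_iff_exists.1 hks
    have hpg : cp.plantComp.run cp.plantComp.q0 s = some g := by
      have hh := sup_run_imp cp s cp.sup.q0 g hg
      rwa [hq0] at hh
    rw [Aut.run_append, hpg] at hgs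
    simp only [Option.bind_some] at hgs
    obtain ⟨g', hg'⟩ := Option.isSome_iff_exists.1 hgs
    have hδ : cp.plantComp.δ g u = some g' := by
      simp only [Aut.run] at hg'
      cases hd : cp.plantComp.δ g u with
      | none => rw [hd] at hg'; simp at hg'
      | some x => rw [hd] at hg'; simpa using hg'
    have hsd : cp.sup.δ g u = some g' := by
      rw [sup_delta, if_neg]
      · exact hδ
      · rintro ⟨r, hr, hre, _⟩
        exact cp.part u ⟨hre ▸ cp.ctrl r hr, hu⟩
    rw [Aut.run_append, hg]
    simp only [Option.bind_some, Aut.run]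
    rw [hsd]
    simp
  · intro g _
    set le : Fin m → Fin m → Bool := fun a b => decide (hgt cp b ≤ hgt cp a) with hle
    set L := (List.finRange m).mergeSort le with hL
    have hsort : L.Pairwise fun a b => hgt cp b ≤ hgt cp a := by
      have hs := List.pairwise_mergeSort (le := le)
        (fun a b c h1 h2 => by simp only [hle, decide_eq_true_eq] at *; omega)
        (fun a b => by simp only [hle, Bool.or_eq_true, decide_eq_true_eq]; omega)
        (List.finRange m)
      rw [← hL] at hs
      exact hs.imp (fun h => by simpa [hle, decide_eq_true_eq] using h)
    obtain ⟨s, g', hs, hm, _⟩ := markdrive cp hacyc L hsort g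
    refine ⟨s, g', hs, ?_⟩
    rw [sup_Qm]
    intro i
    exact hm i ((List.mergeSort_perm (List.finRange m) le).mem_iff.2 (List.mem_finRange i))
  · intro g i t
    obtain ⟨s, g', h1, h2, _⟩ := drive cp hacyc (hgt cp i + 1) i (by omega) g t
    exact ⟨s, g', h1, h2⟩
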